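/- arXiv:1503.02573 — 3 statements merged into one kernel-verified Lean document; each statement's English description precedes it below -/
import Mathlib

section
/- Let Ψ : ℝ₊ × C¹ → ℝ₊ be a Lyapunov function for the ODE system ẋ = f(t,x), and suppose there exist positive integers ς₁, ς₂, ς₃, constants L > 0 and ζ ≥ 0, and positive continuous functions ϑ₁, ϑ₂, ϑ₃ of t with ϑ₁ nondecreasing, such that for all t ≥ 0: (A1) ϑ₁(t)‖x(t)‖^{ς₁} ≤ Ψ(t,x) ≤ ϑ₂(t)‖x(t)‖^{ς₂}, (A2) dΨ/dt(t,x) ≤ −ϑ₃(t)‖x(t)‖^{ς₃} + L, and (A3) Ψ(t,x) − Ψ(t,x)^{ς₃/ς₂} ≤ ζ. Then the solution x is bounded on ℝ₊; explicitly, ‖x(t)‖ ≤ ϑ₁(0)^{−1/ς₁}(ϑ₂(0)‖x₀‖^{ς₂} + (L+aζ)/a)^{1/ς₁} where a = inf_{t≥0} ϑ₃(t)/ϑ₂(t)^{ς₃/ς₂} is assumed positive. -/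
open Real Set

/-- Lyapunov-type boundedness theorem: under (A1)-(A3) and positivity of
`a = inf ϑ₃/ϑ₂^{ς₃/ς₂}`, the solution is explicitly bounded. -/
theorem lyapunov_boundedness
    {n : ℕ} (x : ℝ → EuclideanSpace ℝ (Fin n))
    (Ψ Ψ' : ℝ → ℝ) (ϑ₁ ϑ₂ ϑ₃ : ℝ → ℝ) (ς₁ ς₂ ς₃ : ℕ) (L ζ a : ℝ)
    (hς₁ : 0 < ς₁) (hς₂ : 0 < ς₂) (hς₃ : 0 < ς₃)
    (hL : 0 < L) (hζ : 0 ≤ ζ)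
    (hϑ₁c : Continuous ϑ₁) (hϑ₂c : Continuous ϑ₂) (hϑ₃c : Continuous ϑ₃)
    (hϑ₁pos : ∀ t, 0 ≤ t → 0 < ϑ₁ t) (hϑ₂pos : ∀ t, 0 ≤ t → 0 < ϑ₂ t)
    (hϑ₃pos : ∀ t, 0 ≤ t → 0 < ϑ₃ t)
    (hϑ₁mono : MonotoneOn ϑ₁ (Ici (0 : ℝ)))
    (hΨnonneg : ∀ t, 0 ≤ t → 0 ≤ Ψ t)
    (hA1 : ∀ t, 0 ≤ t →
      ϑ₁ t * ‖x t‖ ^ ς₁ ≤ Ψ t ∧ Ψ t ≤ ϑ₂ t * ‖x t‖ ^ ς₂)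
    (hΨderiv : ∀ t, 0 ≤ t → HasDerivAt Ψ (Ψ' t) t)
    (hA2 : ∀ t, 0 ≤ t → Ψ' t ≤ -ϑ₃ t * ‖x t‖ ^ ς₃ + L)
    (hA3 : ∀ t, 0 ≤ t → Ψ t - Ψ t ^ ((ς₃ : ℝ) / (ς₂ : ℝ)) ≤ ζ)
    (ha : a = ⨅ t : Ici (0 : ℝ), ϑ₃ t / ϑ₂ t ^ ((ς₃ : ℝ) / (ς₂ : ℝ)))
    (hapos : 0 < a) :
    ∀ t, 0 ≤ t →
      ‖x t‖ ≤ ϑ₁ 0 ^ (-(1 : ℝ) / (ς₁ : ℝ)) *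
        (ϑ₂ 0 * ‖x 0‖ ^ ς₂ + (L + a * ζ) / a) ^ ((1 : ℝ) / (ς₁ : ℝ)) := by
  set r : ℝ := (ς₃ : ℝ) / (ς₂ : ℝ) with hrdef
  have hς₂' : (ς₂ : ℝ) ≠ 0 := Nat.cast_ne_zero.2 hς₂.ne'
  have hr0 : 0 ≤ r := by positivity
  set c : ℝ := L + a * ζ with hcdef
  have hc0 : 0 < c := by positivity
  -- a is a lower bound for ϑ₃/ϑ₂^r
  have hainf : ∀ s, 0 ≤ s → a ≤ ϑ₃ s / ϑ₂ s ^ r := by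
    intro s hs
    rw [ha]
    refine ciInf_le ?_ (⟨s, hs⟩ : Ici (0:ℝ))
    refine ⟨0, ?_⟩
    rintro y ⟨⟨u, hu⟩, rfl⟩
    exact div_nonneg (hϑ₃pos u hu).le (Real.rpow_nonneg (hϑ₂pos u hu).le r)
  -- differential inequality Ψ' ≤ -a Ψ + c
  have hdiff : ∀ s, 0 ≤ s → Ψ' s ≤ -a * Ψ s + c := by
    intro s hs
    have hΨ0 := hΨnonneg s hs
    have h1 := (hA1 s hs).2
    have hxpow : ((‖x s‖ ^ ς₂ : ℝ)) ^ r = ‖x s‖ ^ (ς₃ : ℝ) := by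
      rw [← Real.rpow_natCast (‖x s‖) ς₂, ← Real.rpow_mul (norm_nonneg _)]
      congr 1
      rw [hrdef, mul_div_cancel₀ _ hς₂']
    have h2 : Ψ s ^ r ≤ ϑ₂ s ^ r * ‖x s‖ ^ (ς₃ : ℝ) := by
      calc Ψ s ^ r ≤ (ϑ₂ s * ‖x s‖ ^ ς₂) ^ r := Real.rpow_le_rpow hΨ0 h1 hr0
        _ = ϑ₂ s ^ r * (‖x s‖ ^ ς₂ : ℝ) ^ r :=
            Real.mul_rpow (hϑ₂pos s hs).le (pow_nonneg (norm_nonneg _) _)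
        _ = _ := by rw [hxpow]
    have hϑ₂r : 0 < ϑ₂ s ^ r := Real.rpow_pos_of_pos (hϑ₂pos s hs) r
    have h3 : a * Ψ s ^ r ≤ ϑ₃ s * ‖x s‖ ^ ς₃ := by
      calc a * Ψ s ^ r ≤ (ϑ₃ s / ϑ₂ s ^ r) * Ψ s ^ r :=
            mul_le_mul_of_nonneg_right (hainf s hs) (Real.rpow_nonneg hΨ0 r)
        _ ≤ (ϑ₃ s / ϑ₂ s ^ r) * (ϑ₂ s ^ r * ‖x s‖ ^ (ς₃ : ℝ)) :=
            mul_le_mul_of_nonneg_left h2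
              (div_nonneg (hϑ₃pos s hs).le hϑ₂r.le)
        _ = ϑ₃ s * ‖x s‖ ^ (ς₃ : ℝ) := by
            field_simp
        _ = ϑ₃ s * ‖x s‖ ^ ς₃ := by rw [Real.rpow_natCast]
    have h4 : a * (Ψ s - ζ) ≤ a * Ψ s ^ r := by
      have := hA3 s hs
      have : Ψ s - ζ ≤ Ψ s ^ r := by linarith
      exact mul_le_mul_of_nonneg_left this hapos.le
    have h5 := hA2 s hs
    nlinarith
  -- Gronwall: Ψ t ≤ Ψ 0 + c / a
  have hΨbound : ∀ t, 0 ≤ t → Ψ t ≤ Ψ 0 + c / a := by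
    intro t ht
    have hG := le_gronwallBound_of_liminf_deriv_right_le
      (f := Ψ) (f' := Ψ') (δ := Ψ 0) (K := -a) (ε := c) (a := 0) (b := t)
      (fun s hs => ((hΨderiv s hs.1).continuousAt).continuousWithinAt)
      (fun s hs r' hr' =>
        ((hΨderiv s hs.1).hasDerivWithinAt.liminf_right_slope_le hr'))
      le_rfl
      (fun s hs => hdiff s hs.1)
      t ⟨ht, le_rfl⟩
    rw [gronwallBound_of_K_ne_0 (by linarith : (-a : ℝ) ≠ 0)] at hG
    have hE1 : Real.exp (-a * (t - 0)) ≤ 1 := by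
      rw [Real.exp_le_one_iff]; nlinarith
    have hE0 : 0 < Real.exp (-a * (t - 0)) := Real.exp_pos _
    have hqeq : c / -a = -(c / a) := by rw [div_neg]
    rw [hqeq] at hG
    have hq : 0 ≤ c / a := by positivity
    have hΨ00 : 0 ≤ Ψ 0 := hΨnonneg 0 le_rfl
    nlinarith [hG]
  intro t ht
  -- final bound
  have hB : ϑ₁ 0 * ‖x t‖ ^ ς₁ ≤ ϑ₂ 0 * ‖x 0‖ ^ ς₂ + c / a := by
    have h1 : ϑ₁ 0 * ‖x t‖ ^ ς₁ ≤ ϑ₁ t * ‖x t‖ ^ ς₁ :=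
      mul_le_mul_of_nonneg_right (hϑ₁mono (self_mem_Ici) ht ht)
        (pow_nonneg (norm_nonneg _) _)
    have h2 := (hA1 t ht).1
    have h3 := hΨbound t ht
    have h4 := (hA1 0 le_rfl).2
    linarith
  set B : ℝ := ϑ₂ 0 * ‖x 0‖ ^ ς₂ + c / a with hBdef
  have hB0 : 0 < B := by
    have : 0 ≤ ϑ₂ 0 * ‖x 0‖ ^ ς₂ :=
      mul_nonneg (hϑ₂pos 0 le_rfl).le (pow_nonneg (norm_nonneg _) _)
    have : 0 < c / a := by positivity
    rw [hBdef]; linarith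
  have hϑ₁0 := hϑ₁pos 0 le_rfl
  have hx1 : ‖x t‖ ^ ς₁ ≤ B / ϑ₁ 0 := (le_div_iff₀ hϑ₁0).2 (by linarith [hB])
  set p : ℝ := (1 : ℝ) / (ς₁ : ℝ) with hpdef
  have hp0 : 0 ≤ p := by positivity
  have hxeq : ‖x t‖ = ((‖x t‖ ^ ς₁ : ℝ)) ^ p := by
    rw [← Real.rpow_natCast (‖x t‖) ς₁, ← Real.rpow_mul (norm_nonneg _), hpdef,
      mul_one_div, div_self (Nat.cast_ne_zero.2 hς₁.ne'), Real.rpow_one]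
  have hmain : ‖x t‖ ≤ (B / ϑ₁ 0) ^ p := by
    rw [hxeq]
    exact Real.rpow_le_rpow (pow_nonneg (norm_nonneg _) _) hx1 hp0
  have hrhs : (B / ϑ₁ 0) ^ p = ϑ₁ 0 ^ (-(1 : ℝ) / (ς₁ : ℝ)) * B ^ p := by
    rw [Real.div_rpow hB0.le hϑ₁0.le, neg_div, ← hpdef, Real.rpow_neg hϑ₁0.le,
      div_eq_inv_mul]
  calc ‖x t‖ ≤ (B / ϑ₁ 0) ^ p := hmain
    _ = _ := by rw [hrhs]
end

section
/- Let Γ₂ be the 5×5 matrix with rows [−d₁,0,0,0,b₁], [0,−d₂,0,0,b₂], [b₃,0,−d₃,0,0], [0,b₄,0,−d₄,0], [0,0,b₅,b₆,−d₅], with all bᵢ, dᵢ > 0. If R(d₃,d₄) := ((b₁b₃b₅)/(d₁d₃d₅) + (b₂b₄b₆)/(d₂d₄d₅))^{1/3} < 1, then every eigenvalue of Γ₂ has negative real part. -/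
set_option maxRecDepth 8000
set_option maxHeartbeats 1600000

open Real Complex

/-- If the basic mosquito offspring number
`R(d₃,d₄) = ((b₁b₃b₅)/(d₁d₃d₅) + (b₂b₄b₆)/(d₂d₄d₅))^{1/3} < 1`, then every
eigenvalue of the matrix `Γ₂` has negative real part. -/
theorem gamma2_eigenvalues_negative_real_part
    (b₁ b₂ b₃ b₄ b₅ b₆ d₁ d₂ d₃ d₄ d₅ : ℝ)
    (hb₁ : 0 < b₁) (hb₂ : 0 < b₂) (hb₃ : 0 < b₃) (hb₄ : 0 < b₄)
    (hb₅ : 0 < b₅) (hb₆ : 0 < b₆)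
    (hd₁ : 0 < d₁) (hd₂ : 0 < d₂) (hd₃ : 0 < d₃) (hd₄ : 0 < d₄) (hd₅ : 0 < d₅)
    (Γ₂ : Matrix (Fin 5) (Fin 5) ℝ)
    (hΓ₂ : Γ₂ = !![-d₁, 0, 0, 0, b₁;
                   0, -d₂, 0, 0, b₂;
                   b₃, 0, -d₃, 0, 0;
                   0, b₄, 0, -d₄, 0;
                   0, 0, b₅, b₆, -d₅])
    (hR : (b₁ * b₃ * b₅ / (d₁ * d₃ * d₅) + b₂ * b₄ * b₆ / (d₂ * d₄ * d₅)) ^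
        ((1 : ℝ) / 3) < 1) :
    ∀ μ ∈ (Γ₂.map (fun a : ℝ => (a : ℂ))).charpoly.roots, μ.re < 0 := by
  -- From hR, derive that the sum S itself is < 1
  have hSpos : 0 < b₁ * b₃ * b₅ / (d₁ * d₃ * d₅) + b₂ * b₄ * b₆ / (d₂ * d₄ * d₅) := by
    positivity
  have hS : b₁ * b₃ * b₅ / (d₁ * d₃ * d₅) + b₂ * b₄ * b₆ / (d₂ * d₄ * d₅) < 1 := by
    by_contra h
    push_neg at h
    have := Real.one_le_rpow h (by norm_num : (0:ℝ) ≤ 1/3)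
    linarith
  intro μ hμ
  have h0 : Polynomial.eval μ ((Γ₂.map (fun a : ℝ => (a : ℂ))).charpoly) = 0 :=
    Polynomial.isRoot_of_mem_roots hμ
  -- Extract the factored characteristic equation
  have heq : (μ+d₁)*(μ+d₂)*(μ+d₃)*(μ+d₄)*(μ+d₅)
      = b₁*b₃*b₅*((μ+d₂)*(μ+d₄)) + b₂*b₄*b₆*((μ+d₁)*(μ+d₃)) := by
    rw [Matrix.charpoly, ← Polynomial.coe_evalRingHom, RingHom.map_det] at h0
    have hM : ((Γ₂.map (fun a : ℝ => (a : ℂ))).charmatrix).map (Polynomial.evalRingHom μ)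
        = !![μ+d₁, 0, 0, 0, -(b₁:ℂ);
             0, μ+d₂, 0, 0, -(b₂:ℂ);
             -(b₃:ℂ), 0, μ+d₃, 0, 0;
             0, -(b₄:ℂ), 0, μ+d₄, 0;
             0, 0, -(b₅:ℂ), -(b₆:ℂ), μ+d₅] := by
      subst hΓ₂
      ext i j
      fin_cases i <;> fin_cases j <;>
        simp [Matrix.charmatrix_apply, Matrix.map_apply, Matrix.diagonal,
          Matrix.vecHead, Matrix.vecTail]
    rw [RingHom.mapMatrix_apply, hM] at h0
    simp [Matrix.det_succ_row_zero, Fin.sum_univ_succ, Fin.succAbove] at h0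
    linear_combination h0
  -- Suppose for contradiction that μ.re ≥ 0
  by_contra hre
  push_neg at hre
  set A₁ := ‖μ + d₁‖ with hA₁
  set A₂ := ‖μ + d₂‖ with hA₂
  set A₃ := ‖μ + d₃‖ with hA₃
  set A₄ := ‖μ + d₄‖ with hA₄
  set A₅ := ‖μ + d₅‖ with hA₅
  have key : ∀ d : ℝ, 0 < d → d ≤ ‖μ + d‖ := fun d hd => by
    calc d ≤ (μ + d).re := by simp; linarith
    _ ≤ ‖μ + d‖ := Complex.re_le_norm _
  have h1 : d₁ ≤ A₁ := key d₁ hd₁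
  have h2 : d₂ ≤ A₂ := key d₂ hd₂
  have h3 : d₃ ≤ A₃ := key d₃ hd₃
  have h4 : d₄ ≤ A₄ := key d₄ hd₄
  have h5 : d₅ ≤ A₅ := key d₅ hd₅
  -- Take absolute values in the characteristic equation
  have habs : A₁*A₂*A₃*A₄*A₅ ≤ b₁*b₃*b₅*(A₂*A₄) + b₂*b₄*b₆*(A₁*A₃) := by
    have := congrArg (‖·‖) heq
    simp only [norm_mul] at this
    rw [hA₁, hA₂, hA₃, hA₄, hA₅, this]
    calc ‖(b₁:ℂ)*b₃*b₅*((μ+d₂)*(μ+d₄)) + (b₂:ℂ)*b₄*b₆*((μ+d₁)*(μ+d₃))‖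
        ≤ ‖(b₁:ℂ)*b₃*b₅*((μ+d₂)*(μ+d₄))‖
          + ‖(b₂:ℂ)*b₄*b₆*((μ+d₁)*(μ+d₃))‖ := norm_add_le _ _
      _ = b₁*b₃*b₅*(A₂*A₄) + b₂*b₄*b₆*(A₁*A₃) := by
          simp only [norm_mul, Complex.norm_real, Real.norm_eq_abs, hA₁, hA₂, hA₃, hA₄]
          rw [abs_of_pos hb₁, abs_of_pos hb₂, abs_of_pos hb₃, abs_of_pos hb₄,
            abs_of_pos hb₅, abs_of_pos hb₆]
  -- Now derive the contradiction
  set q₁ := b₁ * b₃ * b₅ / (d₁ * d₃ * d₅) with hq₁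
  set q₂ := b₂ * b₄ * b₆ / (d₂ * d₄ * d₅) with hq₂
  have hq₁pos : 0 < q₁ := by positivity
  have hq₂pos : 0 < q₂ := by positivity
  have hc₁ : b₁*b₃*b₅ = q₁ * (d₁*d₃*d₅) := by rw [hq₁]; field_simp
  have hc₂ : b₂*b₄*b₆ = q₂ * (d₂*d₄*d₅) := by rw [hq₂]; field_simp
  have hA₂pos : (0:ℝ) < A₂ := lt_of_lt_of_le hd₂ h2
  have hA₄pos : (0:ℝ) < A₄ := lt_of_lt_of_le hd₄ h4
  have hA₁pos : (0:ℝ) < A₁ := lt_of_lt_of_le hd₁ h1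
  have hA₃pos : (0:ℝ) < A₃ := lt_of_lt_of_le hd₃ h3
  have hA₅pos : (0:ℝ) < A₅ := lt_of_lt_of_le hd₅ h5
  have t₁ : b₁*b₃*b₅*(A₂*A₄) ≤ q₁ * (A₁*A₂*A₃*A₄*A₅) := by
    rw [hc₁]
    have : q₁ * (d₁*d₃*d₅) * (A₂*A₄) ≤ q₁ * (A₁*A₃*A₅) * (A₂*A₄) := by
      gcongr
    calc q₁ * (d₁*d₃*d₅) * (A₂*A₄) ≤ q₁ * (A₁*A₃*A₅) * (A₂*A₄) := this
      _ = q₁ * (A₁*A₂*A₃*A₄*A₅) := by ring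
  have t₂ : b₂*b₄*b₆*(A₁*A₃) ≤ q₂ * (A₁*A₂*A₃*A₄*A₅) := by
    rw [hc₂]
    have : q₂ * (d₂*d₄*d₅) * (A₁*A₃) ≤ q₂ * (A₂*A₄*A₅) * (A₁*A₃) := by
      gcongr
    calc q₂ * (d₂*d₄*d₅) * (A₁*A₃) ≤ q₂ * (A₂*A₄*A₅) * (A₁*A₃) := this
      _ = q₂ * (A₁*A₂*A₃*A₄*A₅) := by ring
  have hPpos : (0:ℝ) < A₁*A₂*A₃*A₄*A₅ := by positivity
  nlinarith [mul_pos hPpos (sub_pos.2 hS)]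
end

section
/- For each fixed (t,y) ∈ [0,T] × ℝ₊⁶, the set S(t,y) := { (g(y,u) + γ, Y₁(y,u), …, Y₆(y,u)) : γ ≥ 0, u ∈ B } ⊆ ℝ⁷ is convex, where B = [0,a₁]×[0,a₂], g(y,u) = ½(∑ᵢ ω_{x,i} yᵢ² + ω_{u,1}u₁² + ω_{u,2}u₂²) is convex quadratic in u, and each component Yᵢ(y,u) is affine in u with Y₁ depending only on u₁ (linearly), Y₂ constant in u, Y₃ affine in (u₁,u₂), Y₄ and Y₅ affine in u₂, and Y₆ ≡ 1. -/
open Real Set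

/-- Convexity of the set `S(t,y)` in the Filippov–Cesari existence theorem for
the controlled mosquito model: with a convex quadratic running cost `g` in the
control and all components of the autonomized vector field `Y` affine in the
control (with the stated structure), the set
`S = {(g(y,u)+γ, Y₁(y,u), …, Y₆(y,u)) : γ ≥ 0, u ∈ B}` is convex. -/
theorem filippov_cesari_set_convex
    (a₁ a₂ : ℝ) (ha₁ : 0 < a₁) (ha₂ : 0 < a₂)
    (ω₁ ω₂ Wy : ℝ) (hω₁ : 0 < ω₁) (hω₂ : 0 < ω₂) (hWy : 0 ≤ Wy)
    (g : (Fin 2 → ℝ) → ℝ)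
    (hg : ∀ u, g u = (1 / 2) * (Wy + ω₁ * (u 0) ^ 2 + ω₂ * (u 1) ^ 2))
    (Y : (Fin 2 → ℝ) → Fin 6 → ℝ)
    -- each component of Y is affine in u
    (c0 c1 c2 : Fin 6 → ℝ)
    (hY : ∀ u i, Y u i = c0 i + c1 i * u 0 + c2 i * u 1)
    -- Y₁ depends only (linearly) on u₁; Y₂ constant in u; Y₄, Y₅ affine in u₂ only
    (hY1 : c2 0 = 0) (hY2 : c1 1 = 0 ∧ c2 1 = 0) (hY4 : c1 3 = 0) (hY5 : c1 4 = 0)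
    -- Y₆ ≡ 1
    (hY6 : ∀ u, Y u 5 = 1) :
    Convex ℝ {ξ : Fin 7 → ℝ | ∃ γ : ℝ, 0 ≤ γ ∧ ∃ u : Fin 2 → ℝ,
      u 0 ∈ Icc 0 a₁ ∧ u 1 ∈ Icc 0 a₂ ∧
      ξ 0 = g u + γ ∧ ∀ i : Fin 6, ξ i.succ = Y u i} := by
  rintro ξ ⟨γ, hγ, u, hu0, hu1, hξ0, hξY⟩ η ⟨δ, hδ, v, hv0, hv1, hη0, hηY⟩ a b ha hb hab
  have key : ∀ (x y c : ℝ), x ∈ Icc 0 c → y ∈ Icc 0 c → a * x + b * y ∈ Icc 0 c := by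
    rintro x y c ⟨hx0, hxc⟩ ⟨hy0, hyc⟩
    constructor
    · positivity
    · calc a * x + b * y ≤ a * c + b * c :=
            add_le_add (mul_le_mul_of_nonneg_left hxc ha) (mul_le_mul_of_nonneg_left hyc hb)
        _ = c := by rw [← add_mul, hab, one_mul]
  refine ⟨a * (g u + γ) + b * (g v + δ) - g (a • u + b • v), ?_, a • u + b • v,
    ?_, ?_, ?_, ?_⟩
  · have hsq : ∀ x y : ℝ, (a * x + b * y) ^ 2 ≤ a * x ^ 2 + b * y ^ 2 := by
      intro x y
      nlinarith [mul_nonneg ha hb, sq_nonneg (x - y)]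
    have h0 := hsq (u 0) (v 0)
    have h1 := hsq (u 1) (v 1)
    simp only [hg, Pi.add_apply, Pi.smul_apply, smul_eq_mul]
    nlinarith [mul_le_mul_of_nonneg_left h0 hω₁.le, mul_le_mul_of_nonneg_left h1 hω₂.le]
  · simpa using key (u 0) (v 0) a₁ hu0 hv0
  · simpa using key (u 1) (v 1) a₂ hu1 hv1
  · simp only [Pi.add_apply, Pi.smul_apply, smul_eq_mul, hξ0, hη0]
    ring
  · intro i
    simp only [Pi.add_apply, Pi.smul_apply, smul_eq_mul, hξY i, hηY i, hY]
    linear_combination (c0 i) * hab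
end
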